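/- Let B_j^{(n)}(x) denote the Norlund polynomials defined by e^{xz} z^n/(e^z-1)^n = \sum_{j \geq 0} B_j^{(n)}(x) z^j/j!. Then for integers p \geq 1 and 0 \leq r \leq p-1, B_r^{(p+1)}(p)/r! = \sum_{k=1}^{r+1} (1/k) B_{r+1-k}^{(p+1-k)}(p-k)/(r+1-k)!. -/

import Mathlib

open PowerSeries

/-- The power series `(e^z - 1)/z = ∑_k z^k/(k+1)!`. -/
noncomputable def egfShiftOne : PowerSeries ℚ :=
  PowerSeries.mk fun k => 1 / (Nat.factorial (k + 1) : ℚ)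

/-- The power series `e^{x z} = ∑_k x^k z^k/k!`. -/
noncomputable def expPS (x : ℚ) : PowerSeries ℚ :=
  PowerSeries.mk fun k => x ^ k / (Nat.factorial k : ℚ)

/-- The Nörlund polynomials `B_j^{(n)}(x)`, defined by
`e^{xz} (z/(e^z-1))^n = ∑_j B_j^{(n)}(x) z^j/j!`. -/
noncomputable def norlund (n : ℕ) (x : ℚ) (j : ℕ) : ℚ :=
  (Nat.factorial j : ℚ) * PowerSeries.coeff j (expPS x * (egfShiftOne⁻¹) ^ n)

lemma expPS_eq_rescale (x : ℚ) : expPS x = rescale x (exp ℚ) := by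
  ext n
  simp [expPS, coeff_rescale, coeff_exp, div_eq_mul_inv]

lemma expPS_add (a b : ℚ) : expPS (a + b) = expPS a * expPS b := by
  rw [expPS_eq_rescale, expPS_eq_rescale, expPS_eq_rescale, exp_mul_exp_eq_exp_add]

lemma expPS_zero : expPS 0 = 1 := by
  ext n
  cases n <;> simp [expPS, coeff_one, Nat.factorial]

lemma expPS_neg_one_pow (k : ℕ) : expPS (-1) ^ k = expPS (-(k : ℚ)) := by
  induction k with
  | zero => simp [expPS_zero]
  | succ n ih =>
      rw [pow_succ, ih, ← expPS_add]
      push_cast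
      ring_nf

lemma X_mul_egfShiftOne : (X : PowerSeries ℚ) * egfShiftOne = expPS 1 - 1 := by
  ext n
  cases n with
  | zero => simp [expPS, coeff_one, Nat.factorial]
  | succ m => simp [coeff_succ_X_mul, egfShiftOne, expPS, coeff_one]

/-- `h = e^{-z}(e^z-1)/z`. -/
noncomputable def hPS : PowerSeries ℚ := expPS (-1) * egfShiftOne

/-- `u = 1 - e^{-z}`. -/
noncomputable def uPS : PowerSeries ℚ := 1 - expPS (-1)

lemma uPS_eq : uPS = X * hPS := by
  rw [uPS, hPS, mul_comm (expPS (-1)), ← mul_assoc, X_mul_egfShiftOne, sub_mul, one_mul,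
    ← expPS_add]
  norm_num [expPS_zero]

lemma derivative_expPS (a : ℚ) : d⁄dX ℚ (expPS a) = C a * expPS a := by
  ext n
  rw [coeff_derivative]
  simp only [expPS, coeff_mk, coeff_C_mul]
  rw [Nat.factorial_succ, pow_succ]
  have h1 : ((n : ℚ) + 1) ≠ 0 := by positivity
  have h2 : ((Nat.factorial n : ℚ)) ≠ 0 := by exact_mod_cast Nat.factorial_ne_zero n
  push_cast
  field_simp

lemma derivative_uPS : d⁄dX ℚ uPS = 1 - uPS := by
  have h : d⁄dX ℚ uPS = expPS (-1) := by
    rw [uPS, map_sub, Derivation.map_one_eq_zero, zero_sub, derivative_expPS]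
    simp [map_neg, map_one]
  rw [h, uPS, sub_sub_cancel]

lemma constantCoeff_uPS : constantCoeff uPS = 0 := by
  rw [uPS_eq]; simp

/-- The truncated log series `∑_{k=1}^N u^k/k`. -/
noncomputable def SPS (N : ℕ) : PowerSeries ℚ :=
  ∑ k ∈ Finset.Icc 1 N, C (1 / (k : ℚ)) * uPS ^ k

lemma derivative_SPS (N : ℕ) : d⁄dX ℚ (SPS N) = 1 - uPS ^ N := by
  rw [SPS, map_sum]
  have h1 : ∀ k ∈ Finset.Icc 1 N,
      d⁄dX ℚ (C (1 / (k : ℚ)) * uPS ^ k) = uPS ^ (k - 1) * (1 - uPS) := by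
    intro k hk
    obtain ⟨hk1, _⟩ := Finset.mem_Icc.mp hk
    have hk0 : (k : ℚ) ≠ 0 := Nat.cast_ne_zero.mpr (by omega)
    rw [Derivation.leibniz, derivative_C, smul_zero, add_zero, Derivation.leibniz_pow,
      derivative_uPS, smul_eq_mul, smul_eq_mul, nsmul_eq_mul, ← mul_assoc, ← mul_assoc]
    have hc : C (1 / (k : ℚ)) * (k : PowerSeries ℚ) = 1 := by
      rw [← map_natCast C k, ← map_mul, one_div, inv_mul_cancel₀ hk0, map_one]
    rw [hc, one_mul]
  rw [Finset.sum_congr rfl h1, ← Finset.Ico_add_one_right_eq_Icc, Finset.sum_Ico_eq_sum_range]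
  simp only [Nat.add_sub_cancel, add_tsub_cancel_left, Nat.succ_sub_one]
  rw [← Finset.sum_mul]
  have hgeo := geom_sum_mul uPS N
  linear_combination -hgeo

lemma coeff_SPS (N : ℕ) (j : ℕ) (hj : j ≤ N) :
    coeff j (SPS N) = coeff j (X : PowerSeries ℚ) := by
  cases j with
  | zero =>
      rw [coeff_zero_eq_constantCoeff]
      rw [SPS, map_sum]
      simp only [map_mul, map_pow, constantCoeff_uPS, constantCoeff_C, constantCoeff_X]
      apply Finset.sum_eq_zero
      intro k hk
      obtain ⟨hk1, _⟩ := Finset.mem_Icc.mp hk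
      rw [zero_pow (by omega), mul_zero]
  | succ m =>
      have hmN : m < N := by omega
      have hd := coeff_derivative (SPS N) m
      rw [derivative_SPS] at hd
      have hu : coeff m (uPS ^ N) = 0 := by
        rw [uPS_eq, mul_pow, coeff_X_pow_mul', if_neg (by omega)]
      have hne : ((m : ℚ) + 1) ≠ 0 := by positivity
      apply mul_right_cancel₀ hne
      rw [← hd, map_sub, hu, sub_zero, coeff_one, coeff_X]
      by_cases hm : m = 0
      · subst hm; norm_num
      · rw [if_neg hm, if_neg (by omega), zero_mul]

lemma egf_mul_inv : egfShiftOne * egfShiftOne⁻¹ = 1 := by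
  apply PowerSeries.mul_inv_cancel
  simp [egfShiftOne, constantCoeff_mk, Nat.factorial]

/-- `B_r^{(p+1)}(p)/r! = ∑_{k=1}^{r+1} (1/k) B_{r+1-k}^{(p+1-k)}(p-k)/(r+1-k)!`. -/
theorem norlund_recurrence (p : ℕ) (hp : 1 ≤ p) (r : ℕ) (hr : r ≤ p - 1) :
    norlund (p + 1) (p : ℚ) r / (Nat.factorial r : ℚ) =
      ∑ k ∈ Finset.Icc 1 (r + 1),
        (1 / (k : ℚ)) * norlund (p + 1 - k) ((p : ℚ) - k) (r + 1 - k) /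
          (Nat.factorial (r + 1 - k) : ℚ) := by
  have hrp : r + 1 ≤ p := by omega
  set g : PowerSeries ℚ := egfShiftOne⁻¹ with hg
  set F : PowerSeries ℚ := expPS p * g ^ (p + 1) with hF
  have hfac : ∀ j : ℕ, ((Nat.factorial j : ℚ)) ≠ 0 :=
    fun j => Nat.cast_ne_zero.mpr (Nat.factorial_ne_zero j)
  have hLHS : norlund (p + 1) (p : ℚ) r / (Nat.factorial r : ℚ) = coeff r F := by
    rw [norlund, mul_comm, mul_div_assoc, div_self (hfac r), mul_one]
  have hterm : ∀ k ∈ Finset.Icc 1 (r + 1),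
      (1 / (k : ℚ)) * norlund (p + 1 - k) ((p : ℚ) - k) (r + 1 - k) /
          (Nat.factorial (r + 1 - k) : ℚ)
        = (1 / (k : ℚ)) * coeff (r + 1) (F * uPS ^ k) := by
    intro k hk
    obtain ⟨hk1, hk2⟩ := Finset.mem_Icc.mp hk
    have e1 : expPS ((p : ℚ) - k) = expPS p * expPS (-1) ^ k := by
      rw [expPS_neg_one_pow, ← expPS_add]; ring_nf
    have e2 : g ^ (p + 1) * egfShiftOne ^ k = g ^ (p + 1 - k) := by
      have hpk : p + 1 - k + k = p + 1 := by omega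
      conv_lhs => rw [← hpk]
      rw [pow_add, mul_assoc, ← mul_pow, mul_comm g egfShiftOne, egf_mul_inv,
        one_pow, mul_one]
    have h1 : expPS ((p : ℚ) - k) * g ^ (p + 1 - k) = F * hPS ^ k := by
      rw [e1, ← e2, hF, hPS, mul_pow]
      ring
    have h2 : norlund (p + 1 - k) ((p : ℚ) - k) (r + 1 - k) / (Nat.factorial (r + 1 - k) : ℚ)
        = coeff (r + 1 - k) (F * hPS ^ k) := by
      rw [norlund, mul_comm, mul_div_assoc, div_self (hfac _), mul_one, h1]
    have h3 : coeff (r + 1 - k) (F * hPS ^ k) = coeff (r + 1) (F * uPS ^ k) := by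
      have : F * uPS ^ k = X ^ k * (F * hPS ^ k) := by
        rw [uPS_eq, mul_pow]; ring
      have hsum : r + 1 - k + k = r + 1 := by omega
      have hc := coeff_X_pow_mul (F * hPS ^ k) k (r + 1 - k)
      rw [hsum] at hc
      rw [this, hc]
    rw [mul_div_assoc, h2, h3]
  rw [hLHS, Finset.sum_congr rfl hterm]
  have h4 : ∑ k ∈ Finset.Icc 1 (r + 1), (1 / (k : ℚ)) * coeff (r + 1) (F * uPS ^ k)
      = coeff (r + 1) (F * SPS (r + 1)) := by
    rw [SPS, Finset.mul_sum, map_sum]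
    apply Finset.sum_congr rfl
    intro k hk
    rw [mul_left_comm F, coeff_C_mul]
  rw [h4]
  have h5 : coeff (r + 1) (F * SPS (r + 1)) = coeff (r + 1) (F * X) := by
    rw [coeff_mul, coeff_mul]
    apply Finset.sum_congr rfl
    intro x hx
    have hx2 : x.2 ≤ r + 1 := by
      have := Finset.HasAntidiagonal.mem_antidiagonal.mp hx
      omega
    rw [coeff_SPS (r + 1) x.2 hx2]
  rw [h5, mul_comm F X, coeff_succ_X_mul]
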